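/- arXiv:2404.02017 — 5 statements merged into one kernel-verified Lean document; each statement's English description precedes it below -/
import Mathlib

section
/- Let f : X × W → Y × W be a non-signalling stochastic matrix on finite nonempty sets, meaning the marginal Σ_y f(y, w | x, w') does not depend on w'. Then the trace Tr(f)(y|x) := Σ_w f(y, w | x, w) defines a stochastic matrix from X to Y, i.e. Σ_y Tr(f)(y|x) = 1 for all x. -/
open NNReal

/-- The trace of a non-signalling stochastic matrix `f : X ⊗ W → Y ⊗ W`
is again a stochastic matrix. -/
theorem trace_nonsignalling_stochastic {X W Y : Type} [Fintype X] [Fintype W]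
    [Fintype Y] [Nonempty W]
    (f : X × W → Y × W → ℝ≥0)
    (hstoch : ∀ xw : X × W, ∑ yw : Y × W, f xw yw = 1)
    (hns : ∀ (x : X) (w w₁ w₂ : W),
      ∑ y, f (x, w₁) (y, w) = ∑ y, f (x, w₂) (y, w)) :
    ∀ x : X, ∑ y, ∑ w, f (x, w) (y, w) = 1 := by
  intro x
  obtain ⟨w₀⟩ := ‹Nonempty W›
  rw [Finset.sum_comm]
  calc ∑ w, ∑ y, f (x, w) (y, w) = ∑ w, ∑ y, f (x, w₀) (y, w) := by
        exact Finset.sum_congr rfl fun w _ => hns x w w w₀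
    _ = ∑ yw : Y × W, f (x, w₀) yw := by
        rw [← Finset.sum_product']
        exact Finset.sum_nbij' (fun p => (p.2, p.1)) (fun p => (p.2, p.1))
          (by simp) (by simp) (by simp) (by simp) (by simp)
    _ = 1 := hstoch (x, w₀)
end

section
/- Comb insertion is well-defined under optic equivalence in any symmetric monoidal category: if combs (E, f₁, g₁) and (E', f₂, g₂) of type (A,A') → (B,B') are related by sliding — i.e. there exists s : E → E' with f₂ = (s ⊗ id_B) ∘ f₁ and g₁ = g₂ ∘ (s ⊗ id_{B'}) — then for every h : B ⊗ K → B' ⊗ K', the insertions agree: (g₁ ⊗ id_{K'}) ∘ (id_E ⊗ h) ∘ (f₁ ⊗ id_K) = (g₂ ⊗ id_{K'}) ∘ (id_{E'} ⊗ h) ∘ (f₂ ⊗ id_K). -/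
open CategoryTheory MonoidalCategory

/-- Comb insertion `C[h]` for a comb `(E, f, g) : (A,A') → (B,B')` and
`h : B ⊗ K ⟶ B' ⊗ K'`. -/
noncomputable def combInsert {C : Type*} [Category C] [MonoidalCategory C]
    {A A' B B' E K K' : C} (f : A ⟶ E ⊗ B) (g : E ⊗ B' ⟶ A')
    (h : B ⊗ K ⟶ B' ⊗ K') : A ⊗ K ⟶ A' ⊗ K' :=
  (f ▷ K) ≫ (α_ E B K).hom ≫ (E ◁ h) ≫ (α_ E B' K').inv ≫ (g ▷ K')

/-- Comb insertion is well-defined under optic (sliding) equivalence. -/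
theorem comb_insertion_respects_sliding {C : Type*} [Category C]
    [MonoidalCategory C] [SymmetricCategory C] {A A' B B' E E' K K' : C}
    (s : E ⟶ E') (f₁ : A ⟶ E ⊗ B) (g₂ : E' ⊗ B' ⟶ A')
    (f₂ : A ⟶ E' ⊗ B) (g₁ : E ⊗ B' ⟶ A')
    (hf : f₂ = f₁ ≫ (s ▷ B)) (hg : g₁ = (s ▷ B') ≫ g₂)
    (h : B ⊗ K ⟶ B' ⊗ K') :
    combInsert f₁ g₁ h = combInsert f₂ g₂ h := by
  subst hf hg
  simp only [combInsert, comp_whiskerRight, Category.assoc]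
  congr 1
  rw [← associator_inv_naturality_left_assoc, whisker_exchange_assoc,
    ← associator_naturality_left_assoc]
end

section
/- For Markov kernels between standard Borel spaces: if f : X → Y and g : Y → X are Markov kernels with g ∘ f = id_X and f ∘ g = id_Y (composition by integration, identity being the Dirac kernel), then f is deterministic, i.e. f commutes with copying: for all x and measurable S ⊆ Y, T ⊆ Y, f(x, S ∩ T) equals the value at x of the kernel (f ⊗ f) ∘ Δ evaluated on S × T, equivalently f(x, S)·f(x, T) = f(x, S ∩ T). -/
open MeasureTheory

/-- If Markov kernels `f : X → Y` and `g : Y → X` between standard Borel spaces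
are mutually inverse (`g ∘ f = id_X`, `f ∘ g = id_Y`), then `f` is
deterministic: `f x S * f x T = f x (S ∩ T)`. -/
theorem inverse_kernels_deterministic {X Y : Type*} [MeasurableSpace X]
    [MeasurableSpace Y] [StandardBorelSpace X] [StandardBorelSpace Y]
    (f : X → Measure Y) (g : Y → Measure X)
    (hf : ∀ x, IsProbabilityMeasure (f x))
    (hg : ∀ y, IsProbabilityMeasure (g y))
    (hfm : ∀ E : Set Y, MeasurableSet E → Measurable fun x => f x E)
    (hgm : ∀ E : Set X, MeasurableSet E → Measurable fun y => g y E)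
    (hgf : ∀ (x : X) (E : Set X), MeasurableSet E →
      ∫⁻ y, g y E ∂(f x) = Measure.dirac x E)
    (hfg : ∀ (y : Y) (E : Set Y), MeasurableSet E →
      ∫⁻ x, f x E ∂(g y) = Measure.dirac y E) :
    ∀ (x : X) (S T : Set Y), MeasurableSet S → MeasurableSet T →
      f x S * f x T = f x (S ∩ T) := by
  have hgmeas : Measurable g := Measure.measurable_of_measurable_coe g hgm
  -- `g ∘ f = id` as composition of kernels (monadic bind of measures)
  have hbind : ∀ x : X, (f x).bind g = Measure.dirac x := by
    intro x
    ext E hE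
    rw [Measure.bind_apply hE hgmeas.aemeasurable]
    exact hgf x E hE
  -- zero-one law: `f x S ∈ {0, 1}` for every measurable `S`
  have key : ∀ (x : X) (S : Set Y), MeasurableSet S → f x S = 0 ∨ f x S = 1 := by
    intro x S hS
    set u : X → ENNReal := fun x' => f x' S with hu
    have humeas : Measurable u := hfm S hS
    have hule : ∀ x', u x' ≤ 1 := fun x' => prob_le_one
    have huu : Measurable fun x' => u x' * u x' := humeas.mul humeas
    -- inner integral of `u²` against `g y` equals that of `u`, which is the indicator of `S`
    have inner : ∀ y : Y, ∫⁻ x', u x' * u x' ∂(g y) = Measure.dirac y S := by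
      intro y
      have hu_int : ∫⁻ x', u x' ∂(g y) = Measure.dirac y S := hfg y S hS
      by_cases hy : y ∈ S
      case neg =>
        have h0 : Measure.dirac y S = 0 := by
          rw [Measure.dirac_apply' y hS, Set.indicator_of_notMem hy]
        rw [h0]
        have : u =ᵐ[g y] 0 := (lintegral_eq_zero_iff humeas).1 (hu_int.trans h0)
        calc ∫⁻ x', u x' * u x' ∂(g y) = ∫⁻ _, (0 : ENNReal) ∂(g y) := by
              refine lintegral_congr_ae (this.mono fun x' hx' => ?_)
              simp [hx']
          _ = 0 := lintegral_zero
      case pos =>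
        have h1 : Measure.dirac y S = 1 := by
          rw [Measure.dirac_apply' y hS, Set.indicator_of_mem hy]; rfl
        rw [h1]
        have hone : ∫⁻ x', u x' ∂(g y) = 1 := hu_int.trans h1
        have hsub : ∫⁻ x', (1 - u x') ∂(g y) = 0 := by
          rw [lintegral_sub humeas (by simp [hone]) (Filter.Eventually.of_forall hule)]
          simp [hone, measure_univ]
        have hae : ∀ᵐ x' ∂(g y), 1 - u x' = 0 := by
          have := (lintegral_eq_zero_iff (measurable_const.sub humeas)).1 hsub
          exact this.mono fun x' hx' => hx'
        have hae1 : ∀ᵐ x' ∂(g y), u x' = 1 := by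
          refine hae.mono fun x' hx' => le_antisymm (hule x') ?_
          exact tsub_eq_zero_iff_le.mp hx'
        calc ∫⁻ x', u x' * u x' ∂(g y) = ∫⁻ _, (1 : ENNReal) ∂(g y) := by
              refine lintegral_congr_ae (hae1.mono fun x' hx' => ?_)
              simp [hx']
          _ = 1 := by simp [measure_univ]
    -- now integrate against `f x` and use `(f x).bind g = dirac x`
    have hsq : u x * u x = u x := by
      have h1 : ∫⁻ x', u x' * u x' ∂((f x).bind g) = u x * u x := by
        rw [hbind x]; exact lintegral_dirac' x huu
      have h2 : ∫⁻ x', u x' * u x' ∂((f x).bind g) = u x := by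
        rw [Measure.lintegral_bind hgmeas.aemeasurable huu.aemeasurable]
        calc ∫⁻ y, ∫⁻ x', u x' * u x' ∂(g y) ∂(f x)
            = ∫⁻ y, Measure.dirac y S ∂(f x) := by
              exact lintegral_congr fun y => inner y
          _ = ∫⁻ y, S.indicator 1 y ∂(f x) := by
              exact lintegral_congr fun y => Measure.dirac_apply' y hS
          _ = f x S := by
              rw [lintegral_indicator hS]; simp
      rw [← h1, h2]
    have hne : u x ≠ ⊤ := (lt_of_le_of_lt (hule x) (by norm_num)).ne
    rcases eq_or_ne (u x) 0 with h0 | h0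
    · exact Or.inl h0
    · right
      have : u x * u x = u x * 1 := by simpa using hsq
      exact (ENNReal.mul_right_inj h0 hne).mp this
  -- deduce the product rule from the zero-one law
  intro x S T hS hT
  haveI := hf x
  rcases key x S hS with hS0 | hS1
  · have : f x (S ∩ T) = 0 :=
      le_antisymm (hS0 ▸ measure_mono Set.inter_subset_left) zero_le
    rw [hS0, this, zero_mul]
  · rcases key x T hT with hT0 | hT1
    · have : f x (S ∩ T) = 0 :=
        le_antisymm (hT0 ▸ measure_mono Set.inter_subset_right) zero_le
      rw [hT0, this, mul_zero]
    · have hcompl : f x Tᶜ = 0 := by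
        rw [prob_compl_eq_one_sub hT, hT1]; simp
      have hdiff : f x (S \ T) = 0 :=
        le_antisymm (hcompl ▸ measure_mono (Set.diff_subset_iff.mpr (by simp))) zero_le
      have := measure_inter_add_diff (μ := f x) S hT
      rw [hdiff, add_zero] at this
      rw [hS1, hT1, this, hS1, one_mul]
end

section
/- For stochastic matrices on finite sets: if f : X → Y and g : Y → X satisfy g∘f = id_X and f∘g = id_Y, then f is deterministic: for every x there is a unique y with f(y|x) = 1, and f(y'|x) = 0 for y' ≠ y. -/
open NNReal

/-- If stochastic matrices `f : X → Y` and `g : Y → X` are mutually inverse,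
then `f` is deterministic: each row of `f` is a point mass. -/
theorem inverse_stochastic_matrices_deterministic {X Y : Type} [Fintype X]
    [Fintype Y] [DecidableEq X] [DecidableEq Y]
    (f : X → Y → ℝ≥0) (g : Y → X → ℝ≥0)
    (hf : ∀ x, ∑ y, f x y = 1) (hg : ∀ y, ∑ x, g y x = 1)
    (hgf : ∀ x x', ∑ y, f x y * g y x' = if x = x' then 1 else 0)
    (hfg : ∀ y y', ∑ x, g y x * f x y' = if y = y' then 1 else 0) :
    ∀ x : X, ∃! y : Y, f x y = 1 ∧ ∀ y', y' ≠ y → f x y' = 0 := by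
  intro x
  -- each entry of g is ≤ 1
  have hle : ∀ y x', g y x' ≤ 1 := by
    intro y x'
    calc g y x' ≤ ∑ x'', g y x'' :=
          Finset.single_le_sum (fun _ _ => zero_le) (Finset.mem_univ x')
      _ = 1 := hg y
  -- if f x y > 0 then g y x = 1
  have key : ∀ y, 0 < f x y → g y x = 1 := by
    intro y hy
    by_contra hne
    have hlt : g y x < 1 := lt_of_le_of_ne (hle y x) hne
    have : ∑ y', f x y' * g y' x < ∑ y', f x y' := by
      apply Finset.sum_lt_sum
      · intro i _
        calc f x i * g i x ≤ f x i * 1 := mul_le_mul_right (hle i x) _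
          _ = f x i := mul_one _
      · exact ⟨y, Finset.mem_univ y, by
          have := mul_lt_mul_of_pos_left hlt hy
          simpa using this⟩
    rw [hf x] at this
    have h1 : ∑ y', f x y' * g y' x = 1 := by simpa using hgf x x
    rw [h1] at this
    exact lt_irrefl _ this
  -- at most one support point
  have uniq_supp : ∀ y₁ y₂, 0 < f x y₁ → 0 < f x y₂ → y₁ = y₂ := by
    intro y₁ y₂ h1 h2
    by_contra hne
    have hzero : ∑ x', g y₁ x' * f x' y₂ = 0 := by
      rw [hfg y₁ y₂, if_neg hne]
    have := (Finset.sum_eq_zero_iff.mp hzero) x (Finset.mem_univ x)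
    rw [key y₁ h1, one_mul] at this
    exact absurd this h2.ne'
  -- existence of a support point
  obtain ⟨y, hy⟩ : ∃ y, 0 < f x y := by
    by_contra h
    push_neg at h
    have : (∑ y, f x y) = 0 :=
      Finset.sum_eq_zero fun y _ => le_antisymm (h y) zero_le
    rw [hf x] at this
    exact one_ne_zero this
  have hothers : ∀ y', y' ≠ y → f x y' = 0 := by
    intro y' hne
    by_contra h
    exact hne (uniq_supp y' y (pos_iff_ne_zero.mpr h) hy)
  have hfy : f x y = 1 := by
    have := hf x
    rwa [Finset.sum_eq_single y (fun b _ hb => hothers b hb) (fun h => absurd (Finset.mem_univ y) h)] at this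
  refine ⟨y, ⟨hfy, hothers⟩, ?_⟩
  rintro y' ⟨h1, _⟩
  exact uniq_supp y' y (by rw [h1]; exact one_pos) hy
end

section
/- In BorelStoch, atomic morphisms are not closed under composition: let X = [0,1] and define the kernel p : X × {0,1} → X by p(x,0) = δ_x and p(x,1) = ν (Lebesgue measure). Then every point of X is an atom of p (so p is completely atomic), but the composite p ∘ σ with the Dirac state σ = δ_{(x₀,1)} equals ν, which has no atoms. -/
open MeasureTheory

/-- In `BorelStoch`, atomic morphisms are not closed under composition: the
kernel `p` with `p(x,0) = δ_x` and `p(x,1) = ν` is completely atomic (each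
`p a` gives full mass to the set of atoms of `p`), yet the composite with the
Dirac state at `(x₀, 1)` equals `ν`, which has no atoms. -/
theorem atomic_not_closed_under_composition
    (p : ℝ × Bool → Measure ℝ)
    (hp0 : ∀ x : ℝ, p (x, false) = Measure.dirac x)
    (hp1 : ∀ x : ℝ, p (x, true) = volume.restrict (Set.Icc (0:ℝ) 1)) :
    (∀ a : ℝ × Bool, p a {x : ℝ | ∃ a', 0 < p a' {x}} = 1) ∧
    (∀ x₀ : ℝ, p (x₀, true) = volume.restrict (Set.Icc (0:ℝ) 1) ∧
      ∀ x : ℝ, p (x₀, true) {x} = 0) := by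
  have hset : {x : ℝ | ∃ a', 0 < p a' {x}} = Set.univ := by
    ext x
    simp only [Set.mem_setOf_eq, Set.mem_univ, iff_true]
    exact ⟨(x, false), by simp [hp0 x]⟩
  constructor
  · rintro ⟨x, b⟩
    rw [hset]
    cases b
    · simp [hp0 x]
    · rw [hp1 x]
      simp [Measure.restrict_apply, Real.volume_Icc]
  · intro x₀
    refine ⟨hp1 x₀, fun x => ?_⟩
    rw [hp1 x₀]
    simp [Measure.restrict_apply]
end
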